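/- Let s,t > 0 with s+t > 1, s ≠ 1, t ≠ 1. Among the four numbers q1 = s/(s+t), q2 = s/(t^2+st+s-t), q3 = 1/(s+t), q4 = 1/2, no three are equal. -/

import Mathlib

/-- among q1 = s/(s+t), q2 = s/(t^2+st+s-t), q3 = 1/(s+t), q4 = 1/2,
no three are equal. -/
theorem stmt_15 (s t : ℝ) (hs : 0 < s) (ht : 0 < t) (hst : 1 < s + t)
    (hs1 : s ≠ 1) (ht1 : t ≠ 1) :
    let q1 : ℝ := s / (s + t)
    let q2 : ℝ := s / (t ^ 2 + s * t + s - t)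
    let q3 : ℝ := 1 / (s + t)
    let q4 : ℝ := 1 / 2
    ¬(q1 = q2 ∧ q2 = q3) ∧ ¬(q1 = q2 ∧ q2 = q4) ∧
      ¬(q1 = q3 ∧ q3 = q4) ∧ ¬(q2 = q3 ∧ q3 = q4) := by
  intro q1 q2 q3 q4
  have hD : s + t ≠ 0 := by linarith
  refine ⟨?_, ?_, ?_, ?_⟩
  · rintro ⟨h1, h2⟩
    have h13 : q1 = q3 := h1.trans h2
    apply hs1
    have := h13
    simp only [q1, q3] at this; field_simp at this
    linarith
  · rintro ⟨h1, h2⟩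
    by_cases hE : t ^ 2 + s * t + s - t = 0
    · rw [show q2 = s / (t ^ 2 + s * t + s - t) from rfl, hE, div_zero] at h2
      norm_num [q4] at h2
    · have h14 : q1 = q4 := h1.trans h2
      have e1 : s * 2 = s + t := by
        have := h14
        simp only [q1, q4] at this; field_simp [hD] at this
        linarith
      have e2 : s * 2 = t ^ 2 + s * t + s - t := by
        have := h2
        simp only [q2, q4] at this; rw [div_eq_div_iff hE two_ne_zero] at this
        linarith
      have hts : s = t := by linarith
      apply ht1
      rw [hts] at e2
      have : t * 2 = t ^ 2 + t * t + t - t := e2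
      have h2t : 2 * t ^ 2 = 2 * t := by ring_nf; ring_nf at this; linarith
      have : t * (t - 1) = 0 := by nlinarith
      rcases mul_eq_zero.mp this with h | h
      · linarith
      · linarith
  · rintro ⟨h1, _⟩
    apply hs1
    have := h1
    simp only [q1, q3] at this; field_simp at this
    linarith
  · rintro ⟨h1, h2⟩
    have hsum : s + t = 2 := by
      have := h2
      simp only [q3, q4] at this; field_simp [hD] at this
      linarith
    by_cases hE : t ^ 2 + s * t + s - t = 0
    · rw [show q2 = s / (t ^ 2 + s * t + s - t) from rfl, hE, div_zero] at h1
      have : (0:ℝ) = 1 / (s + t) := h1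
      rw [hsum] at this
      norm_num at this
    · have h24 : q2 = q4 := h1.trans h2
      have e2 : s * 2 = t ^ 2 + s * t + s - t := by
        have := h24
        simp only [q2, q4] at this; rw [div_eq_div_iff hE two_ne_zero] at this
        linarith
      apply ht1
      linear_combination (-(1:ℝ)/2) * e2 + ((1 - t)/2 + 1) * hsum - hsum
  done
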